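/- For λ, t > 0, the function x ↦ (3/(λ^3 t^3 x^4))·(6 - (6 + 6λtx + 3λ^2 t^2 x^2 + λ^3 t^3 x^3)·e^{-λ t x}) on (0,∞) integrates to 1, i.e. it is a probability density on (0,∞). -/

import Mathlib

open MeasureTheory Real Filter Set Topology

noncomputable def hh (y : ℝ) : ℝ := 6 - (6 + 6*y + 3*y^2 + y^3) * Real.exp (-y)

lemma hh_hasDeriv (y : ℝ) : HasDerivAt hh (y^3 * Real.exp (-y)) y := by
  have h1 : HasDerivAt (fun y : ℝ => 6 + 6*y + 3*y^2 + y^3) (6 + 6*y + 3*y^2) y := by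
    have h0 := (((hasDerivAt_const y (6:ℝ)).add ((hasDerivAt_id y).const_mul 6)).add
      ((hasDerivAt_pow 2 y).const_mul 3)).add (hasDerivAt_pow 3 y)
    refine h0.congr_deriv ?_
    push_cast; ring
  have h2 : HasDerivAt (fun y : ℝ => Real.exp (-y)) (-Real.exp (-y)) y := by
    have := (Real.hasDerivAt_exp (-y)).comp y ((hasDerivAt_id y).neg)
    refine this.congr_deriv ?_; simp
  have h4 := (hasDerivAt_const y (6:ℝ)).sub (h1.mul h2)
  refine h4.congr_deriv ?_
  ring

lemma hh_zero : hh 0 = 0 := by simp [hh]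

lemma hh_nonneg {y : ℝ} (hy : 0 ≤ y) : 0 ≤ hh y := by
  rw [← hh_zero]
  have : MonotoneOn hh (Set.Icc 0 y) := by
    apply monotoneOn_of_deriv_nonneg (convex_Icc 0 y)
      (fun x _ => (hh_hasDeriv x).continuousAt.continuousWithinAt)
      (fun x _ => ((hh_hasDeriv x).differentiableAt).differentiableWithinAt)
    intro x hx
    rw [interior_Icc] at hx
    rw [(hh_hasDeriv x).deriv]
    have hx0 : (0:ℝ) < x := hx.1
    positivity
  rcases eq_or_lt_of_le hy with h | h
  · rw [← h]
  exact this (Set.left_mem_Icc.2 hy) (Set.right_mem_Icc.2 hy) hy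

lemma hh_le {y : ℝ} (hy : 0 ≤ y) : hh y ≤ y^3 * y := by
  have key := Convex.norm_image_sub_le_of_norm_hasDerivWithin_le
    (f := hh) (f' := fun x => x^3 * Real.exp (-x)) (s := Set.Icc 0 y) (C := y^3)
    (fun x _ => (hh_hasDeriv x).hasDerivWithinAt)
    (fun x hx => by
      have hx0 : 0 ≤ x := hx.1
      have hxy : x ≤ y := hx.2
      have he : Real.exp (-x) ≤ 1 := Real.exp_le_one_iff.2 (by linarith)
      have hep := Real.exp_pos (-x)
      show ‖x^3 * Real.exp (-x)‖ ≤ y^3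
      rw [Real.norm_eq_abs, abs_of_nonneg (by positivity)]
      nlinarith [pow_le_pow_left₀ hx0 hxy 3, pow_nonneg hx0 3])
    (convex_Icc 0 y) (Set.left_mem_Icc.2 hy) (Set.right_mem_Icc.2 hy)
  rw [hh_zero, sub_zero, Real.norm_eq_abs, Real.norm_eq_abs, sub_zero,
    abs_of_nonneg (hh_nonneg hy), abs_of_nonneg hy] at key
  linarith

noncomputable def FF (a : ℝ) (x : ℝ) : ℝ :=
  if x ≤ 0 then -1 else -Real.exp (-(a*x)) - hh (a*x) * (a^3 * x^3)⁻¹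

lemma FF_hasDeriv (a : ℝ) (ha : 0 < a) {x : ℝ} (hx : 0 < x) :
    HasDerivAt (FF a) ((3 / (a ^ 3 * x ^ 4)) * hh (a*x)) x := by
  have hne : a^3 * x^3 ≠ 0 := by positivity
  have hE : HasDerivAt (fun x : ℝ => Real.exp (-(a*x))) (-a * Real.exp (-(a*x))) x := by
    have := (Real.hasDerivAt_exp (-(a*x))).comp x (((hasDerivAt_id x).const_mul a).neg)
    refine this.congr_deriv ?_; ring
  have hH : HasDerivAt (fun x : ℝ => hh (a*x)) (a * ((a*x)^3 * Real.exp (-(a*x)))) x := by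
    have := (hh_hasDeriv (a*x)).comp x ((hasDerivAt_id x).const_mul a)
    refine this.congr_deriv ?_; ring
  have hI : HasDerivAt (fun x : ℝ => (a^3 * x^3)⁻¹) (-(a^3 * (3*x^2)) / (a^3*x^3)^2) x :=
    (((hasDerivAt_pow 3 x).const_mul (a^3)).inv hne).congr_deriv (by push_cast; ring)
  have hder := (hE.neg).sub (hH.mul hI)
  have heq : ∀ᶠ y in 𝓝 x, FF a y = -Real.exp (-(a*y)) - hh (a*y) * (a^3 * y^3)⁻¹ := by
    filter_upwards [eventually_gt_nhds hx] with y hy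
    simp [FF, not_le.2 hy]
  refine (hder.congr_of_eventuallyEq ?_).congr_deriv ?_
  · filter_upwards [heq] with y hy using hy
  · field_simp
    ring

lemma FF_tendsto_atTop (a : ℝ) (ha : 0 < a) : Tendsto (FF a) atTop (𝓝 0) := by
  have hax : Tendsto (fun x : ℝ => a * x) atTop atTop :=
    Tendsto.const_mul_atTop ha tendsto_id
  have hP : Tendsto (fun y : ℝ => (6 + 6*y + 3*y^2 + y^3) * Real.exp (-y)) atTop (𝓝 0) := by
    have h0 := Real.tendsto_pow_mul_exp_neg_atTop_nhds_zero 0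
    have h1 := Real.tendsto_pow_mul_exp_neg_atTop_nhds_zero 1
    have h2 := Real.tendsto_pow_mul_exp_neg_atTop_nhds_zero 2
    have h3 := Real.tendsto_pow_mul_exp_neg_atTop_nhds_zero 3
    have := (((h0.const_mul 6).add (h1.const_mul 6)).add (h2.const_mul 3)).add h3
    simp only [mul_zero, add_zero, zero_add] at this
    refine this.congr (fun y => by ring)
  have hhh : Tendsto (fun x : ℝ => hh (a*x)) atTop (𝓝 6) := by
    have : Tendsto hh atTop (𝓝 (6 - 0)) := (tendsto_const_nhds.sub hP)
    have h := this.comp hax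
    simp only [sub_zero] at h
    exact h
  have hinv : Tendsto (fun x : ℝ => (a^3 * x^3)⁻¹) atTop (𝓝 0) := by
    refine tendsto_inv_atTop_zero.comp ?_
    exact Tendsto.const_mul_atTop (by positivity) (tendsto_pow_atTop (by norm_num))
  have hexp : Tendsto (fun x : ℝ => Real.exp (-(a*x))) atTop (𝓝 0) := by
    refine Real.tendsto_exp_atBot.comp ?_
    exact (tendsto_neg_atBot_iff.2 hax)
  have := ((hexp.neg).sub (hhh.mul hinv))
  simp only [neg_zero, mul_zero, sub_zero] at this
  refine this.congr' ?_
  filter_upwards [eventually_gt_atTop (0:ℝ)] with x hx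
  simp [FF, not_le.2 hx]

lemma FF_cont (a : ℝ) (ha : 0 < a) : ContinuousWithinAt (FF a) (Set.Ici 0) 0 := by
  have h0 : FF a 0 = -1 := by simp [FF]
  unfold ContinuousWithinAt
  rw [h0, show (Set.Ici (0:ℝ)) = insert 0 (Set.Ioi 0) by rw [Set.Ioi_insert], nhdsWithin_insert]
  refine Tendsto.sup ?_ ?_
  · rw [← h0]; exact tendsto_pure_nhds (FF a) 0
  · have hq : Tendsto (fun x : ℝ => hh (a*x) * (a^3 * x^3)⁻¹) (𝓝[>] 0) (𝓝 0) := by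
      apply squeeze_zero' (f := fun x => hh (a*x) * (a^3*x^3)⁻¹) (g := fun x => a * x)
      · filter_upwards [self_mem_nhdsWithin] with x hx
        have hx0 : (0:ℝ) < x := hx
        have := hh_nonneg (y := a*x) (by positivity)
        positivity
      · filter_upwards [self_mem_nhdsWithin] with x hx
        have hx0 : (0:ℝ) < x := hx
        have hle := hh_le (y := a*x) (by positivity)
        rw [mul_inv_le_iff₀ (by positivity)]
        calc hh (a*x) ≤ (a*x)^3 * (a*x) := hle
          _ = a * x * (a^3 * x^3) := by ring
      · have : Tendsto (fun x : ℝ => a * x) (𝓝[>] 0) (𝓝 (a * 0)) :=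
          ((continuous_const.mul continuous_id).tendsto 0).mono_left nhdsWithin_le_nhds
        simpa using this
    have hexp : Tendsto (fun x : ℝ => Real.exp (-(a*x))) (𝓝[>] 0) (𝓝 1) := by
      have : Tendsto (fun x : ℝ => Real.exp (-(a*x))) (𝓝 0) (𝓝 (Real.exp (-(a*0)))) :=
        (Real.continuous_exp.comp ((continuous_const.mul continuous_id).neg)).tendsto 0
      simp only [mul_zero, neg_zero, Real.exp_zero] at this
      exact this.mono_left nhdsWithin_le_nhds
    have := (hexp.neg).sub hq
    simp only [sub_zero] at this
    refine this.congr' ?_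
    filter_upwards [self_mem_nhdsWithin] with x hx
    have hx0 : (0:ℝ) < x := hx
    simp [FF, not_le.2 hx0]

theorem master (a : ℝ) (ha : 0 < a) :
    ∫ x in Set.Ioi (0:ℝ),
      (3 / (a ^ 3 * x ^ 4)) * (6 - (6 + 6 * a * x + 3 * a ^ 2 * x ^ 2 + a ^ 3 * x ^ 3) * Real.exp (-(a * x))) = 1 := by
  have key := integral_Ioi_of_hasDerivAt_of_nonneg (g := FF a)
    (g' := fun x => (3 / (a ^ 3 * x ^ 4)) * hh (a*x)) (a := 0)
    (FF_cont a ha) (fun x hx => FF_hasDeriv a ha hx)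
    (fun x hx => by
      have hx0 : (0:ℝ) < x := hx
      have := hh_nonneg (y := a*x) (by positivity)
      positivity)
    (FF_tendsto_atTop a ha)
  have h0 : FF a 0 = -1 := by simp [FF]
  rw [h0] at key
  calc ∫ x in Set.Ioi (0:ℝ), (3 / (a ^ 3 * x ^ 4)) * (6 - (6 + 6 * a * x + 3 * a ^ 2 * x ^ 2 + a ^ 3 * x ^ 3) * Real.exp (-(a * x)))
      = ∫ x in Set.Ioi (0:ℝ), (3 / (a ^ 3 * x ^ 4)) * hh (a*x) := by
        congr 1; funext x; unfold hh; ring_nf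
    _ = 0 - (-1) := key
    _ = 1 := by norm_num

theorem stit_length_density_integrates_to_one (l t : ℝ) (hl : 0 < l) (ht : 0 < t) :
    ∫ x in Set.Ioi (0:ℝ),
      (3 / (l ^ 3 * t ^ 3 * x ^ 4)) *
        (6 - (6 + 6 * l * t * x + 3 * l ^ 2 * t ^ 2 * x ^ 2 + l ^ 3 * t ^ 3 * x ^ 3) *
          Real.exp (-(l * t * x))) = 1 := by
  have h := master (l*t) (by positivity)
  rw [← h]
  congr 1
  funext x
  ring_nf
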